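/- If f is a higher order automorphic form of weight k₁ and order s₁ and g is a higher order automorphic form of weight k₂ and order s₂ (with s₁, s₂ ≥ 1), then the pointwise product f·g is a higher order automorphic form of weight k₁ + k₂ and order s₁ + s₂ − 1. -/

import Mathlib

noncomputable section

abbrev SL2R := Matrix.SpecialLinearGroup (Fin 2) ℝ

/-- Möbius action of `SL₂(ℝ)` on `ℂ`. -/
def mact (g : SL2R) (z : ℂ) : ℂ :=
  ((((g : Matrix (Fin 2) (Fin 2) ℝ) 0 0 : ℝ) : ℂ) * z + (((g : Matrix (Fin 2) (Fin 2) ℝ) 0 1 : ℝ) : ℂ)) /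
    ((((g : Matrix (Fin 2) (Fin 2) ℝ) 1 0 : ℝ) : ℂ) * z + (((g : Matrix (Fin 2) (Fin 2) ℝ) 1 1 : ℝ) : ℂ))

/-- The automorphy factor `j(γ,z) = cz + d`. -/
def jfac (g : SL2R) (z : ℂ) : ℂ :=
  (((g : Matrix (Fin 2) (Fin 2) ℝ) 1 0 : ℝ) : ℂ) * z + (((g : Matrix (Fin 2) (Fin 2) ℝ) 1 1 : ℝ) : ℂ)

/-- The weight-`k` slash action `(f|_k γ)(z) = j(γ,z)^{-k} f(γz)`. -/
def slash (k : ℤ) (f : ℂ → ℂ) (g : SL2R) : ℂ → ℂ :=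
  fun z => jfac g z ^ (-k) * f (mact g z)

variable (Γ : Subgroup SL2R)

/-- The augmentation (degree) map `ℤ[Γ] → ℤ`. -/
def degMap : MonoidAlgebra ℤ Γ →+* ℤ :=
  ((MonoidAlgebra.lift ℤ ℤ Γ) 1).toRingHom

/-- The augmentation ideal `J = ker(deg)`. -/
def augIdeal : Ideal (MonoidAlgebra ℤ Γ) := RingHom.ker (degMap Γ)

/-- The slash action extended `ℤ`-linearly to the group ring `ℤ[Γ]`. -/
def slashL (k : ℤ) (f : ℂ → ℂ) (x : MonoidAlgebra ℤ Γ) : ℂ → ℂ :=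
  fun z => x.coeff.sum fun g a => (a : ℂ) * slash k f (g : SL2R) z

/-- The space `M_k^s(Γ)` of higher order automorphic forms of weight `k`
and order `s` (on the upper half-plane), with `M_k^0(Γ) = ℂ` the constants. -/
def HO (k : ℤ) (s : ℕ) : Set (ℂ → ℂ) :=
  if s = 0 then {f | ∃ c : ℂ, ∀ z : ℂ, 0 < z.im → f z = c}
  else {f | ∀ x ∈ (augIdeal Γ) ^ s, ∀ z : ℂ, 0 < z.im → slashL Γ k f x z = 0}

/-! ### Auxiliary lemmas -/

lemma det_entry (g : SL2R) :
    (g : Matrix (Fin 2) (Fin 2) ℝ) 0 0 * (g : Matrix (Fin 2) (Fin 2) ℝ) 1 1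
      - (g : Matrix (Fin 2) (Fin 2) ℝ) 0 1 * (g : Matrix (Fin 2) (Fin 2) ℝ) 1 0 = 1 := by
  have h := Matrix.SpecialLinearGroup.det_coe g
  rwa [Matrix.det_fin_two] at h

lemma jfac_ne_zero (g : SL2R) (z : ℂ) (hz : 0 < z.im) : jfac g z ≠ 0 := by
  intro h
  rw [jfac] at h
  have him := congrArg Complex.im h
  have hre := congrArg Complex.re h
  simp [Complex.add_im, Complex.add_re, Complex.mul_im, Complex.mul_re] at him hre
  have hc : (g : Matrix (Fin 2) (Fin 2) ℝ) 1 0 = 0 := by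
    rcases him with h' | h'
    · exact h'
    · exact absurd h' (ne_of_gt hz)
  have hd : (g : Matrix (Fin 2) (Fin 2) ℝ) 1 1 = 0 := by
    rw [hc] at hre; simpa using hre
  have := det_entry g
  rw [hc, hd] at this
  simp at this

lemma im_mact_pos (g : SL2R) (z : ℂ) (hz : 0 < z.im) : 0 < (mact g z).im := by
  have hden := jfac_ne_zero g z hz
  have hnsq : 0 < Complex.normSq (jfac g z) := Complex.normSq_pos.2 hden
  have heq : (mact g z).im = z.im / Complex.normSq (jfac g z) := by
    rw [mact, Complex.div_im]
    have hdet := det_entry g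
    rw [jfac]
    simp only [Complex.add_im, Complex.add_re, Complex.mul_im, Complex.mul_re,
      Complex.ofReal_re, Complex.ofReal_im]
    rw [div_sub_div_same]
    congr 1
    nlinarith [hdet]
  rw [heq]
  exact div_pos hz hnsq

lemma jfac_mul (g h : SL2R) (z : ℂ) (hz : 0 < z.im) :
    jfac (g * h) z = jfac g (mact h z) * jfac h z := by
  have hd : jfac h z ≠ 0 := jfac_ne_zero h z hz
  rw [jfac] at hd
  simp only [jfac, mact, Matrix.SpecialLinearGroup.coe_mul, Matrix.mul_apply,
    Fin.sum_univ_two]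
  push_cast
  field_simp
  ring

lemma mact_mul (g h : SL2R) (z : ℂ) (hz : 0 < z.im) :
    mact (g * h) z = mact g (mact h z) := by
  have hd : jfac h z ≠ 0 := jfac_ne_zero h z hz
  have hd2 : jfac g (mact h z) ≠ 0 := jfac_ne_zero g _ (im_mact_pos h z hz)
  have hkey : jfac (g * h) z ≠ 0 := by
    rw [jfac_mul g h z hz]; exact mul_ne_zero hd2 hd
  rw [jfac] at hd
  rw [jfac, mact] at hd2
  rw [jfac] at hkey
  simp only [mact]
  rw [div_eq_div_iff hkey hd2]
  simp only [Matrix.SpecialLinearGroup.coe_mul, Matrix.mul_apply, Fin.sum_univ_two] at *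
  push_cast at *
  field_simp
  ring

lemma slash_mul (k : ℤ) (f : ℂ → ℂ) (g h : SL2R) (z : ℂ) (hz : 0 < z.im) :
    slash k f (g * h) z = slash k (slash k f g) h z := by
  simp only [slash]
  rw [jfac_mul g h z hz, mact_mul g h z hz, mul_zpow]
  ring

lemma slash_one (k : ℤ) (f : ℂ → ℂ) (z : ℂ) : slash k f 1 z = f z := by
  simp [slash, jfac, mact, Matrix.SpecialLinearGroup.coe_one, Matrix.one_apply]

lemma slash_prod (k₁ k₂ : ℤ) (f g : ℂ → ℂ) (γ : SL2R) (z : ℂ) (hz : 0 < z.im) :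
    slash (k₁ + k₂) (fun w => f w * g w) γ z = slash k₁ f γ z * slash k₂ g γ z := by
  simp only [slash]
  rw [neg_add, zpow_add₀ (jfac_ne_zero γ z hz)]
  ring

/-! ### Linearity of `slashL` -/

lemma slashL_eq (k : ℤ) (f : ℂ → ℂ) (x : MonoidAlgebra ℤ Γ) (z : ℂ) :
    slashL Γ k f x z =
      Finsupp.linearCombination ℤ (fun γ : Γ => slash k f (γ : SL2R) z) x.coeff := by
  rw [slashL, Finsupp.linearCombination_apply, Finsupp.sum, Finsupp.sum]
  exact Finset.sum_congr rfl fun γ _ => by rw [zsmul_eq_mul]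

lemma slashL_add (k : ℤ) (f : ℂ → ℂ) (x y : MonoidAlgebra ℤ Γ) (z : ℂ) :
    slashL Γ k f (x + y) z = slashL Γ k f x z + slashL Γ k f y z := by
  simp [slashL_eq, MonoidAlgebra.coeff_add, map_add]

lemma slashL_sub (k : ℤ) (f : ℂ → ℂ) (x y : MonoidAlgebra ℤ Γ) (z : ℂ) :
    slashL Γ k f (x - y) z = slashL Γ k f x z - slashL Γ k f y z := by
  simp [slashL_eq, MonoidAlgebra.coeff_sub, map_sub]

lemma slashL_smul (k : ℤ) (f : ℂ → ℂ) (c : ℤ) (x : MonoidAlgebra ℤ Γ) (z : ℂ) :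
    slashL Γ k f (c • x) z = (c : ℂ) * slashL Γ k f x z := by
  rw [slashL_eq, slashL_eq, MonoidAlgebra.coeff_smul, map_smul, zsmul_eq_mul]

lemma slashL_single (k : ℤ) (f : ℂ → ℂ) (γ : Γ) (a : ℤ) (z : ℂ) :
    slashL Γ k f (MonoidAlgebra.single γ a) z = (a : ℂ) * slash k f (γ : SL2R) z := by
  rw [slashL]
  rw [MonoidAlgebra.coeff_single, Finsupp.sum_single_index]
  simp

lemma slashL_one (k : ℤ) (f : ℂ → ℂ) (z : ℂ) : slashL Γ k f 1 z = f z := by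
  rw [MonoidAlgebra.one_def, slashL_single]
  simp [slash_one]

lemma slashL_congr (k : ℤ) {F G : ℂ → ℂ} (hFG : ∀ w, 0 < w.im → F w = G w)
    (x : MonoidAlgebra ℤ Γ) (z : ℂ) (hz : 0 < z.im) :
    slashL Γ k F x z = slashL Γ k G x z := by
  rw [slashL, slashL, Finsupp.sum, Finsupp.sum]
  refine Finset.sum_congr rfl fun γ _ => ?_
  rw [slash, slash, hFG _ (im_mact_pos _ _ hz)]

lemma slashL_fun_add (k : ℤ) (F G : ℂ → ℂ) (x : MonoidAlgebra ℤ Γ) (z : ℂ) :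
    slashL Γ k (fun w => F w + G w) x z = slashL Γ k F x z + slashL Γ k G x z := by
  simp only [slashL, slash, Finsupp.sum]
  rw [← Finset.sum_add_distrib]
  exact Finset.sum_congr rfl fun γ _ => by ring

lemma slashL_fun_sub (k : ℤ) (F G : ℂ → ℂ) (x : MonoidAlgebra ℤ Γ) (z : ℂ) :
    slashL Γ k (fun w => F w - G w) x z = slashL Γ k F x z - slashL Γ k G x z := by
  simp only [slashL, slash, Finsupp.sum]
  rw [← Finset.sum_sub_distrib]
  exact Finset.sum_congr rfl fun γ _ => by ring

lemma slashL_fun_vanish (k : ℤ) {F : ℂ → ℂ} (hF : ∀ w, 0 < w.im → F w = 0)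
    (x : MonoidAlgebra ℤ Γ) (z : ℂ) (hz : 0 < z.im) :
    slashL Γ k F x z = 0 := by
  rw [slashL_congr Γ k (G := fun _ => 0) hF x z hz]
  simp [slashL, slash]

/-! ### Action compatibility -/

lemma slashL_single_one_mul (k : ℤ) (f : ℂ → ℂ) (γ : Γ) (y : MonoidAlgebra ℤ Γ)
    (z : ℂ) (hz : 0 < z.im) :
    slashL Γ k f (MonoidAlgebra.single γ 1 * y) z
      = slashL Γ k (slash k f (γ : SL2R)) y z := by
  refine MonoidAlgebra.induction_linear (motive := fun y : MonoidAlgebra ℤ Γ => slashL Γ k f (MonoidAlgebra.single γ 1 * y) z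
      = slashL Γ k (slash k f (γ : SL2R)) y z) y ?_ (fun a b ha hb => ?_) (fun δ b => ?_)
  · simp [slashL]
  · simp only [mul_add, slashL_add, ha, hb]
  · show slashL Γ k f (MonoidAlgebra.single γ 1 * MonoidAlgebra.single δ b) z = _
    rw [MonoidAlgebra.single_mul_single, one_mul, slashL_single, slashL_single,
      Subgroup.coe_mul, slash_mul k f _ _ z hz]

lemma slashL_sub_one_mul (k : ℤ) (f : ℂ → ℂ) (γ : Γ) (y : MonoidAlgebra ℤ Γ)
    (z : ℂ) (hz : 0 < z.im) :
    slashL Γ k f ((MonoidAlgebra.single γ 1 - 1) * y) z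
      = slashL Γ k (fun w => slash k f (γ : SL2R) w - f w) y z := by
  rw [sub_mul, one_mul, slashL_sub, slashL_single_one_mul Γ k f γ y z hz,
    slashL_fun_sub]

/-! ### The augmentation ideal -/

lemma degMap_single (γ : Γ) (a : ℤ) : degMap Γ (MonoidAlgebra.single γ a) = a := by
  simp [degMap, MonoidAlgebra.lift_single]

lemma single_sub_one_mem (γ : Γ) :
    (MonoidAlgebra.single γ 1 - 1 : MonoidAlgebra ℤ Γ) ∈ augIdeal Γ := by
  rw [augIdeal, RingHom.mem_ker, map_sub, map_one, degMap_single, sub_self]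

lemma augIdeal_le_span (x : MonoidAlgebra ℤ Γ) (hx : x ∈ augIdeal Γ) :
    x ∈ Submodule.span ℤ
      {u : MonoidAlgebra ℤ Γ | ∃ γ : Γ, u = MonoidAlgebra.single γ 1 - 1} := by
  have hdeg : degMap Γ x = 0 := hx
  have hdeg' : degMap Γ x = ∑ γ ∈ x.coeff.support, x.coeff γ := by
    simp [degMap, MonoidAlgebra.lift_apply, Finsupp.sum]
  have key : ∑ γ ∈ x.coeff.support, (x.coeff γ) • (MonoidAlgebra.single γ 1 - 1 : MonoidAlgebra ℤ Γ)
      = x := by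
    have h1 : ∀ γ ∈ x.coeff.support,
        (x.coeff γ) • (MonoidAlgebra.single γ 1 - 1 : MonoidAlgebra ℤ Γ)
          = MonoidAlgebra.single γ (x.coeff γ) - (x.coeff γ) • 1 := by
      intro γ _
      rw [smul_sub, MonoidAlgebra.smul_single', mul_one]
    rw [Finset.sum_congr rfl h1, Finset.sum_sub_distrib, ← Finset.sum_smul,
      ← hdeg', hdeg, zero_smul, sub_zero]
    exact MonoidAlgebra.sum_coeff_single x
  rw [← key]
  refine Submodule.sum_mem _ fun γ _ => Submodule.smul_mem _ _ ?_
  exact Submodule.subset_span ⟨γ, rfl⟩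

lemma augIdeal_mul_one : augIdeal Γ * 1 = augIdeal Γ := by
  apply le_antisymm
  · rw [Submodule.mul_le]
    intro m hm n _
    have hdm : degMap Γ m = 0 := hm
    show m * n ∈ augIdeal Γ
    rw [augIdeal, RingHom.mem_ker, map_mul, hdm, zero_mul]
  · intro m hm
    have h1 : (1 : MonoidAlgebra ℤ Γ) ∈ (1 : Ideal (MonoidAlgebra ℤ Γ)) :=
      Submodule.one_le.mp le_rfl
    simpa using Submodule.mul_mem_mul hm h1

lemma augIdeal_pow_succ (n : ℕ) :
    augIdeal Γ ^ (n + 1) = augIdeal Γ * augIdeal Γ ^ n := by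
  induction n with
  | zero =>
    rw [Submodule.pow_succ, Submodule.pow_zero, Submodule.one_mul]
    exact (augIdeal_mul_one Γ).symm
  | succ n ihn =>
    rw [Submodule.pow_succ, ihn, mul_assoc, ← Submodule.pow_succ, ihn]

/-! ### The key induction -/

lemma key_lemma : ∀ N : ℕ, ∀ s₁ s₂ : ℕ, 1 ≤ s₁ → 1 ≤ s₂ → s₁ + s₂ ≤ N →
    ∀ k₁ k₂ : ℤ, ∀ f g : ℂ → ℂ,
    (∀ x ∈ (augIdeal Γ) ^ s₁, ∀ z : ℂ, 0 < z.im → slashL Γ k₁ f x z = 0) →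
    (∀ x ∈ (augIdeal Γ) ^ s₂, ∀ z : ℂ, 0 < z.im → slashL Γ k₂ g x z = 0) →
    ∀ x ∈ (augIdeal Γ) ^ (s₁ + s₂ - 1), ∀ z : ℂ, 0 < z.im →
      slashL Γ (k₁ + k₂) (fun w => f w * g w) x z = 0 := by
  intro N
  induction N with
  | zero => intro s₁ s₂ h1 h2 h; omega
  | succ N ih =>
    intro s₁ s₂ hs₁ hs₂ hN k₁ k₂ f g hf hg x hx z hz
    have hn : s₁ + s₂ - 1 = (s₁ + s₂ - 2) + 1 := by omega
    rw [hn, augIdeal_pow_succ] at hx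
    refine Submodule.mul_induction_on hx (fun m hm y hy => ?_)
      (fun a b ha hb => by rw [slashL_add, ha, hb, add_zero])
    have hm' := augIdeal_le_span Γ m hm
    refine Submodule.span_induction
      (p := fun u _ => slashL Γ (k₁ + k₂) (fun w => f w * g w) (u * y) z = 0)
      ?_ ?_ ?_ ?_ hm'
    · rintro u ⟨γ, rfl⟩
      rw [slashL_sub_one_mul Γ _ _ γ y z hz]
      have hcongr : ∀ w, 0 < w.im →
          (slash (k₁ + k₂) (fun w => f w * g w) (γ : SL2R) w - f w * g w)
            = ((slash k₁ f (γ : SL2R) w - f w) * slash k₂ g (γ : SL2R) w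
                + f w * (slash k₂ g (γ : SL2R) w - g w)) := by
        intro w hw
        rw [slash_prod k₁ k₂ f g (γ : SL2R) w hw]
        ring
      rw [slashL_congr Γ _ hcongr y z hz, slashL_fun_add]
      have term1 : slashL Γ (k₁ + k₂)
          (fun w => (slash k₁ f (γ : SL2R) w - f w) * slash k₂ g (γ : SL2R) w) y z = 0 := by
        by_cases hone : s₁ = 1
        · refine slashL_fun_vanish Γ _ (fun w hw => ?_) y z hz
          have h0 : slash k₁ f (γ : SL2R) w - f w = 0 := by
            have h := hf (MonoidAlgebra.single γ 1 - 1)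
              (by rw [hone, Submodule.pow_one]; exact single_sub_one_mem Γ γ) w hw
            rwa [slashL_sub, slashL_single, slashL_one, Int.cast_one, one_mul] at h
          rw [h0, zero_mul]
        · have hy' : y ∈ (augIdeal Γ) ^ ((s₁ - 1) + s₂ - 1) := by
            have : (s₁ - 1) + s₂ - 1 = s₁ + s₂ - 2 := by omega
            rwa [this]
          refine ih (s₁ - 1) s₂ (by omega) hs₂ (by omega) k₁ k₂ _ _ ?_ ?_ y hy' z hz
          · intro x' hx' w hw
            rw [← slashL_sub_one_mul Γ k₁ f γ x' w hw]
            refine hf _ ?_ w hw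
            have hpow : (augIdeal Γ) ^ s₁ = augIdeal Γ * (augIdeal Γ) ^ (s₁ - 1) := by
              conv_lhs => rw [show s₁ = (s₁ - 1) + 1 by omega]
              rw [augIdeal_pow_succ]
            rw [hpow]
            exact Submodule.mul_mem_mul (single_sub_one_mem Γ γ) hx'
          · intro x' hx' w hw
            rw [← slashL_single_one_mul Γ k₂ g γ x' w hw]
            exact hg _ (Ideal.mul_mem_left _ _ hx') w hw
      have term2 : slashL Γ (k₁ + k₂)
          (fun w => f w * (slash k₂ g (γ : SL2R) w - g w)) y z = 0 := by
        by_cases hone : s₂ = 1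
        · refine slashL_fun_vanish Γ _ (fun w hw => ?_) y z hz
          have h0 : slash k₂ g (γ : SL2R) w - g w = 0 := by
            have h := hg (MonoidAlgebra.single γ 1 - 1)
              (by rw [hone, Submodule.pow_one]; exact single_sub_one_mem Γ γ) w hw
            rwa [slashL_sub, slashL_single, slashL_one, Int.cast_one, one_mul] at h
          rw [h0, mul_zero]
        · have hy' : y ∈ (augIdeal Γ) ^ (s₁ + (s₂ - 1) - 1) := by
            have : s₁ + (s₂ - 1) - 1 = s₁ + s₂ - 2 := by omega
            rwa [this]
          refine ih s₁ (s₂ - 1) hs₁ (by omega) (by omega) k₁ k₂ _ _ hf ?_ y hy' z hz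
          · intro x' hx' w hw
            rw [← slashL_sub_one_mul Γ k₂ g γ x' w hw]
            refine hg _ ?_ w hw
            have hpow : (augIdeal Γ) ^ s₂ = augIdeal Γ * (augIdeal Γ) ^ (s₂ - 1) := by
              conv_lhs => rw [show s₂ = (s₂ - 1) + 1 by omega]
              rw [augIdeal_pow_succ]
            rw [hpow]
            exact Submodule.mul_mem_mul (single_sub_one_mem Γ γ) hx'
      rw [term1, term2, add_zero]
    · simp [slashL]
    · intro a b _ _ ha hb
      rw [add_mul, slashL_add, ha, hb, add_zero]
    · intro c u _ hu
      rw [smul_mul_assoc, slashL_smul, hu, mul_zero]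

/-- The product of a weight-`k₁` order-`s₁` form and a weight-`k₂` order-`s₂`
form (`s₁, s₂ ≥ 1`) is a weight-`(k₁+k₂)` order-`(s₁+s₂−1)` form. -/
theorem higher_order_product (Γ : Subgroup SL2R) (k₁ k₂ : ℤ) (s₁ s₂ : ℕ)
    (hs₁ : 1 ≤ s₁) (hs₂ : 1 ≤ s₂) (f g : ℂ → ℂ)
    (hf : f ∈ HO Γ k₁ s₁) (hg : g ∈ HO Γ k₂ s₂) :
    (fun z => f z * g z) ∈ HO Γ (k₁ + k₂) (s₁ + s₂ - 1) := by
  rw [HO, if_neg (by omega : ¬ s₁ = 0)] at hf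
  rw [HO, if_neg (by omega : ¬ s₂ = 0)] at hg
  rw [HO, if_neg (by omega : ¬ s₁ + s₂ - 1 = 0)]
  exact key_lemma Γ (s₁ + s₂) s₁ s₂ hs₁ hs₂ le_rfl k₁ k₂ f g hf hg
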